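/- For any two density matrices ρ, σ on ℂ^d, Tr[(√ρ - √σ)²] ≤ ‖ρ - σ‖₁, i.e. the squared Hellinger-type distance (1/2)H_{1/2}(ρ‖σ) is bounded above by the trace distance E₁(ρ‖σ) = (1/2)Tr|ρ - σ| after appropriate normalization: specifically (1/2)·Tr[(√ρ-√σ)²] ≤ (1/2)‖ρ-σ‖₁. -/

import Mathlib

open Matrix BigOperators
open scoped ComplexOrder

open scoped Classical in
/-- `Tr[X₊]`: sum of the nonnegative eigenvalues of a Hermitian matrix (0 otherwise). -/
noncomputable def trPos {n : Type*} [Fintype n] [DecidableEq n] (X : Matrix n n ℂ) : ℝ :=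
  if h : X.IsHermitian then ∑ i, max (h.eigenvalues i) 0 else 0

/-- Hockey-stick divergence `E_γ(ρ‖σ) = Tr(ρ - γσ)₊`. -/
noncomputable def Egamma {n : Type*} [Fintype n] [DecidableEq n]
    (γ : ℝ) (ρ σ : Matrix n n ℂ) : ℝ :=
  trPos (ρ - (γ : ℂ) • σ)

/-- Trace norm `‖A‖₁ = Tr√(AᴴA)`: sum of singular values. -/
noncomputable def traceNorm {n : Type*} [Fintype n] [DecidableEq n] (A : Matrix n n ℂ) : ℝ :=
  ∑ i, Real.sqrt (((Matrix.posSemidef_conjTranspose_mul_self A).1).eigenvalues i)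

/-- Real power `ρ^α` of a Hermitian matrix via its spectral decomposition. -/
noncomputable def mpow {n : Type*} [Fintype n] [DecidableEq n]
    {ρ : Matrix n n ℂ} (hρ : ρ.IsHermitian) (α : ℝ) : Matrix n n ℂ :=
  (hρ.eigenvectorUnitary : Matrix n n ℂ) *
    Matrix.diagonal (fun i => ((hρ.eigenvalues i ^ α : ℝ) : ℂ)) *
    (star hρ.eigenvectorUnitary : Matrix n n ℂ)

/-- Fidelity `F(ρ,σ) = ‖√ρ√σ‖₁`. -/
noncomputable def fid {n : Type*} [Fintype n] [DecidableEq n]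
    {ρ σ : Matrix n n ℂ} (hρ : ρ.IsHermitian) (hσ : σ.IsHermitian) : ℝ :=
  traceNorm (mpow hρ (1/2) * mpow hσ (1/2))

/-- A density matrix: positive semidefinite with unit trace. -/
def IsDensity {n : Type*} [Fintype n] [DecidableEq n] (ρ : Matrix n n ℂ) : Prop :=
  ρ.PosSemidef ∧ ρ.trace = 1

namespace PS
variable {n : Type*} [Fintype n] [DecidableEq n]

/-- functional calculus for a Hermitian matrix -/
noncomputable def hcfc {C : Matrix n n ℂ} (hC : C.IsHermitian) (f : ℝ → ℝ) : Matrix n n ℂ :=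
  (hC.eigenvectorUnitary : Matrix n n ℂ) *
    Matrix.diagonal (fun i => ((f (hC.eigenvalues i) : ℝ) : ℂ)) *
    (star hC.eigenvectorUnitary : Matrix n n ℂ)

lemma hcfc_mul {C : Matrix n n ℂ} (hC : C.IsHermitian) (f g : ℝ → ℝ) :
    hcfc hC f * hcfc hC g = hcfc hC (fun x => f x * g x) := by
  unfold hcfc
  set U : Matrix n n ℂ := (hC.eigenvectorUnitary : Matrix n n ℂ) with hUdef
  set D1 : Matrix n n ℂ := Matrix.diagonal (fun i => ((f (hC.eigenvalues i) : ℝ) : ℂ)) with hD1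
  set D2 : Matrix n n ℂ := Matrix.diagonal (fun i => ((g (hC.eigenvalues i) : ℝ) : ℂ)) with hD2
  have h1 : star U * U = 1 := UnitaryGroup.star_mul_self _
  calc U * D1 * star U * (U * D2 * star U)
      = U * (D1 * ((star U * U) * (D2 * star U))) := by simp only [Matrix.mul_assoc]
    _ = U * (D1 * D2) * star U := by
        rw [h1, Matrix.one_mul]; simp only [Matrix.mul_assoc]
    _ = U * Matrix.diagonal (fun i => ((f (hC.eigenvalues i) * g (hC.eigenvalues i) : ℝ) : ℂ)) * star U := by
        rw [hD1, hD2, Matrix.diagonal_mul_diagonal]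
        norm_cast

lemma hcfc_congr {C : Matrix n n ℂ} (hC : C.IsHermitian) {f g : ℝ → ℝ}
    (h : ∀ i, f (hC.eigenvalues i) = g (hC.eigenvalues i)) : hcfc hC f = hcfc hC g := by
  have he : (fun i => ((f (hC.eigenvalues i) : ℝ) : ℂ)) = (fun i => ((g (hC.eigenvalues i) : ℝ) : ℂ)) :=
    funext fun i => by rw [h i]
  unfold hcfc; rw [he]

lemma hcfc_id {C : Matrix n n ℂ} (hC : C.IsHermitian) : hcfc hC (fun x => x) = C :=
  hC.spectral_theorem.symm

lemma hcfc_one {C : Matrix n n ℂ} (hC : C.IsHermitian) : hcfc hC (fun _ => 1) = 1 := by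
  unfold hcfc
  have : (Matrix.diagonal (fun _ : n => (((1:ℝ) : ℝ) : ℂ))) = 1 := by
    simp [Matrix.diagonal_one]
  rw [this, Matrix.mul_one]
  exact (hC.eigenvectorUnitary).2.2

lemma hcfc_herm {C : Matrix n n ℂ} (hC : C.IsHermitian) (f : ℝ → ℝ) :
    (hcfc hC f).IsHermitian := by
  unfold hcfc
  rw [Matrix.star_eq_conjTranspose]
  exact Matrix.isHermitian_mul_mul_conjTranspose _
    (Matrix.isHermitian_diagonal_iff.mpr fun i => IsSelfAdjoint.star_eq (by exact Complex.conj_ofReal _))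

lemma hcfc_psd {C : Matrix n n ℂ} (hC : C.IsHermitian) (f : ℝ → ℝ)
    (h : ∀ i, 0 ≤ f (hC.eigenvalues i)) : (hcfc hC f).PosSemidef := by
  unfold hcfc
  rw [Matrix.star_eq_conjTranspose]
  exact (Matrix.PosSemidef.diagonal fun i => by
    simpa using Complex.zero_le_real.mpr (h i)).mul_mul_conjTranspose_same _

lemma trace_conj_unitary (U : Matrix n n ℂ) (hU : star U * U = 1) (d : n → ℂ) :
    (U * Matrix.diagonal d * star U).trace = ∑ i, d i := by
  rw [Matrix.trace_mul_cycle, hU, Matrix.one_mul, Matrix.trace_diagonal]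

lemma hcfc_trace {C : Matrix n n ℂ} (hC : C.IsHermitian) (f : ℝ → ℝ) :
    (hcfc hC f).trace = ∑ i, ((f (hC.eigenvalues i) : ℝ) : ℂ) :=
  trace_conj_unitary _ (UnitaryGroup.star_mul_self _) _

lemma hcfc_sub {C : Matrix n n ℂ} (hC : C.IsHermitian) (f g : ℝ → ℝ) :
    hcfc hC f - hcfc hC g = hcfc hC (fun x => f x - g x) := by
  unfold hcfc
  rw [← Matrix.sub_mul, ← Matrix.mul_sub, Matrix.diagonal_sub]
  congr 2; exact funext fun i => by push_cast; ring

lemma hcfc_add {C : Matrix n n ℂ} (hC : C.IsHermitian) (f g : ℝ → ℝ) :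
    hcfc hC f + hcfc hC g = hcfc hC (fun x => f x + g x) := by
  unfold hcfc
  rw [← Matrix.add_mul, ← Matrix.mul_add, Matrix.diagonal_add]
  congr 2; exact funext fun i => by push_cast; ring

lemma psd_trace_re_nonneg {M : Matrix n n ℂ} (h : M.PosSemidef) : 0 ≤ M.trace.re := by
  rw [Matrix.trace]
  have : ∀ i, 0 ≤ (M i i).re := by
    intro i
    have h2 := h.dotProduct_mulVec_nonneg (Pi.single i 1)
    have h3 : dotProduct (star (Pi.single i 1)) (M *ᵥ (Pi.single i 1)) = M i i := by
      simp [dotProduct, Matrix.mulVec, Pi.single_apply, Finset.sum_ite_eq']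
    rw [h3] at h2
    exact (Complex.le_def.mp h2).1
  simpa [Matrix.diag] using Finset.sum_nonneg fun i _ => this i

lemma hcfc_eq_cfc {C : Matrix n n ℂ} (hC : C.IsHermitian) (f : ℝ → ℝ) :
    hcfc hC f = cfc f C := by
  rw [hC.cfc_eq]; rfl

lemma trace_mul_psd_psd_nonneg {M N : Matrix n n ℂ} (hM : M.PosSemidef) (hN : N.PosSemidef) :
    0 ≤ (M * N).trace.re := by
  have hS : hcfc hM.1 Real.sqrt * hcfc hM.1 Real.sqrt = M := by
    rw [hcfc_mul, hcfc_congr hM.1 (g := fun x => x) fun i => Real.mul_self_sqrt (hM.eigenvalues_nonneg i),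
      hcfc_id]
  have h1 : (M * N).trace = (hcfc hM.1 Real.sqrt * N * hcfc hM.1 Real.sqrt).trace := by
    conv_lhs => rw [← hS, Matrix.mul_assoc, Matrix.trace_mul_comm]
  rw [h1]
  have hherm : (hcfc hM.1 Real.sqrt)ᴴ = hcfc hM.1 Real.sqrt := hcfc_herm _ _
  have h2 : ((hcfc hM.1 Real.sqrt)ᴴ * N * hcfc hM.1 Real.sqrt).PosSemidef := hN.conjTranspose_mul_mul_same _
  rw [hherm] at h2
  exact psd_trace_re_nonneg h2

end PS

/-- `(1/2)·Tr[(√ρ - √σ)²] ≤ (1/2)‖ρ - σ‖₁`, i.e. `(1/2)H_{1/2}(ρ‖σ) ≤ E₁(ρ‖σ)`. -/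
theorem stmt_11 {n : Type*} [Fintype n] [DecidableEq n] (ρ σ : Matrix n n ℂ)
    (hρ : IsDensity ρ) (hσ : IsDensity σ) :
    (1/2) * (((mpow hρ.1.1 (1/2) - mpow hσ.1.1 (1/2)) ^ 2).trace.re) ≤
      (1/2) * traceNorm (ρ - σ) := by
  have hρp : ρ.PosSemidef := hρ.1
  have hσp : σ.PosSemidef := hσ.1
  set A := mpow hρ.1.1 (1/2) with hAdef
  set B := mpow hσ.1.1 (1/2) with hBdef
  have hAc : A = PS.hcfc hρ.1.1 (fun x => x ^ ((1:ℝ)/2)) := rfl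
  have hBc : B = PS.hcfc hσ.1.1 (fun x => x ^ ((1:ℝ)/2)) := rfl
  have hAh : A.IsHermitian := by rw [hAc]; exact PS.hcfc_herm _ _
  have hBh : B.IsHermitian := by rw [hBc]; exact PS.hcfc_herm _ _
  have hApsd : A.PosSemidef := by
    rw [hAc]; exact PS.hcfc_psd _ _ fun i => Real.rpow_nonneg (hρp.eigenvalues_nonneg i) _
  have hBpsd : B.PosSemidef := by
    rw [hBc]; exact PS.hcfc_psd _ _ fun i => Real.rpow_nonneg (hσp.eigenvalues_nonneg i) _
  have hA2 : A * A = ρ := by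
    rw [hAc, PS.hcfc_mul,
      PS.hcfc_congr hρ.1.1 (g := fun x => x) fun i => by
        rw [← Real.sqrt_eq_rpow]; exact Real.mul_self_sqrt (hρp.eigenvalues_nonneg i),
      PS.hcfc_id]
  have hB2 : B * B = σ := by
    rw [hBc, PS.hcfc_mul,
      PS.hcfc_congr hσ.1.1 (g := fun x => x) fun i => by
        rw [← Real.sqrt_eq_rpow]; exact Real.mul_self_sqrt (hσp.eigenvalues_nonneg i),
      PS.hcfc_id]
  set C := A - B with hCdef
  have hCh : C.IsHermitian := hAh.sub hBh
  have hCid : PS.hcfc hCh (fun x => x) = C := PS.hcfc_id hCh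
  set absC := PS.hcfc hCh (fun x => |x|) with habs
  set W := PS.hcfc hCh (fun x => if 0 ≤ x then (1:ℝ) else -1) with hWdef
  have hWC : W * C = absC := by
    have h0 : PS.hcfc hCh (fun x => if 0 ≤ x then (1:ℝ) else -1) * PS.hcfc hCh (fun x => x)
        = PS.hcfc hCh (fun x => |x|) := by
      rw [PS.hcfc_mul]
      exact PS.hcfc_congr _ fun i => by
        split_ifs with h
        · rw [one_mul, abs_of_nonneg h]
        · rw [neg_one_mul, abs_of_neg (lt_of_not_ge h)]
    rw [hCid, ← habs, ← hWdef] at h0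
    exact h0
  have hCW : C * W = absC := by
    have h0 : PS.hcfc hCh (fun x => x) * PS.hcfc hCh (fun x => if 0 ≤ x then (1:ℝ) else -1)
        = PS.hcfc hCh (fun x => |x|) := by
      rw [PS.hcfc_mul]
      exact PS.hcfc_congr _ fun i => by
        split_ifs with h
        · rw [mul_one, abs_of_nonneg h]
        · rw [mul_neg_one, abs_of_neg (lt_of_not_ge h)]
    rw [hCid, ← habs, ← hWdef] at h0
    exact h0
  -- Step 1 : Tr[C²] ≤ Tr[|C|(A+B)]
  have psd1 : (absC - C).PosSemidef := by
    have h0 : (PS.hcfc hCh (fun x => |x|) - PS.hcfc hCh (fun x => x)).PosSemidef := by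
      rw [PS.hcfc_sub]
      exact PS.hcfc_psd _ _ fun i => sub_nonneg.mpr (le_abs_self _)
    rw [hCid, ← habs] at h0
    exact h0
  have psd2 : (absC + C).PosSemidef := by
    have h0 : (PS.hcfc hCh (fun x => |x|) + PS.hcfc hCh (fun x => x)).PosSemidef := by
      rw [PS.hcfc_add]
      exact PS.hcfc_psd _ _ fun i => by
        have := neg_abs_le (hCh.eigenvalues i); linarith
    rw [hCid, ← habs] at h0
    exact h0
  have h1 : ((C * C).trace).re ≤ ((absC * (A + B)).trace).re := by
    have e1 : absC * (A + B) - C * C = (absC - C) * A + (absC + C) * B := by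
      rw [hCdef]; noncomm_ring
    have e2 : ((absC * (A + B)).trace).re - ((C * C).trace).re =
        (((absC - C) * A).trace).re + (((absC + C) * B).trace).re := by
      rw [← Complex.sub_re, ← Complex.add_re, ← Matrix.trace_sub, ← Matrix.trace_add, e1]
    have t1 := PS.trace_mul_psd_psd_nonneg psd1 hApsd
    have t2 := PS.trace_mul_psd_psd_nonneg psd2 hBpsd
    linarith
  -- Step 2 : Tr[|C|(A+B)] = Tr[W(ρ-σ)]
  have h2 : (W * (ρ - σ)).trace = (absC * (A + B)).trace := by
    have hAB : C * (A + B) + (A + B) * C = (ρ - σ) + (ρ - σ) := by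
      rw [← hA2, ← hB2, hCdef]; noncomm_ring
    have e3 : W * (C * (A + B)) + W * ((A + B) * C) = W * (ρ - σ) + W * (ρ - σ) := by
      rw [← Matrix.mul_add, ← Matrix.mul_add, hAB]
    have e4 : (W * (C * (A + B))).trace = (absC * (A + B)).trace := by
      rw [← Matrix.mul_assoc, hWC]
    have e5 : (W * ((A + B) * C)).trace = (absC * (A + B)).trace := by
      rw [← Matrix.mul_assoc, Matrix.trace_mul_cycle, hCW]
    have e6 := congrArg Matrix.trace e3
    rw [Matrix.trace_add, Matrix.trace_add, e4, e5] at e6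
    have e7 : (2:ℂ) * (absC * (A + B)).trace = 2 * (W * (ρ - σ)).trace := by
      rw [two_mul, two_mul]; exact e6
    exact (mul_left_cancel₀ two_ne_zero e7).symm
  -- Step 3 : Tr[W(ρ-σ)] ≤ ‖ρ-σ‖₁
  set X := ρ - σ with hXdef
  have hX : X.IsHermitian := hρp.1.sub hσp.1
  have habsX_psd : (PS.hcfc hX (fun x => |x|)).PosSemidef :=
    PS.hcfc_psd _ _ fun i => abs_nonneg _
  have hsq : (PS.hcfc hX (fun x => |x|)) ^ 2 = Xᴴ * X := by
    rw [pow_two, PS.hcfc_mul,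
      PS.hcfc_congr hX (g := fun x => x * x) fun i => abs_mul_abs_self _,
      ← PS.hcfc_mul, PS.hcfc_id, hX.eq]
  have hsqrt_eq : PS.hcfc hX (fun x => |x|) =
      PS.hcfc (Matrix.posSemidef_conjTranspose_mul_self X).1 Real.sqrt := by
    rw [PS.hcfc_eq_cfc, PS.hcfc_eq_cfc, hX.eq]
    calc cfc (fun x => |x|) X = cfc (Real.sqrt ∘ fun x => x * x) X :=
          cfc_congr (fun x _ => by simp [Real.sqrt_mul_self_eq_abs])
      _ = cfc Real.sqrt (cfc (fun x => x * x) X) := cfc_comp _ _ X hX.isSelfAdjoint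
      _ = cfc Real.sqrt (X * X) := by
          rw [cfc_mul (fun x => x) (fun x => x) X, cfc_id' ℝ X]
  have htn : traceNorm X = ∑ i, |hX.eigenvalues i| := by
    have ht1 : ((PS.hcfc (Matrix.posSemidef_conjTranspose_mul_self X).1 Real.sqrt).trace) =
        ∑ i, ((Real.sqrt (((Matrix.posSemidef_conjTranspose_mul_self X).1).eigenvalues i) : ℝ) : ℂ) :=
      PS.trace_conj_unitary _ (Matrix.UnitaryGroup.star_mul_self _) _
    have ht2 := congrArg Complex.re ht1
    rw [← hsqrt_eq, PS.hcfc_trace] at ht2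
    have ht3 : (∑ i, ((|hX.eigenvalues i| : ℝ) : ℂ)).re = ∑ i, |hX.eigenvalues i| := by
      rw [Complex.re_sum]; simp
    have ht4 : (∑ i, ((Real.sqrt (((Matrix.posSemidef_conjTranspose_mul_self X).1).eigenvalues i) : ℝ) : ℂ)).re
        = traceNorm X := by
      rw [Complex.re_sum]; simp [traceNorm]
    rw [ht3, ht4] at ht2
    exact ht2.symm
  have hbound : ((W * X).trace).re ≤ ∑ i, |hX.eigenvalues i| := by
    set V : Matrix n n ℂ := (hX.eigenvectorUnitary : Matrix n n ℂ) with hV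
    set M : Matrix n n ℂ := star V * W * V with hM
    have hVV : star V * V = 1 := UnitaryGroup.star_mul_self _
    have hVV' : V * star V = 1 := (hX.eigenvectorUnitary).2.2
    have hWh : W.IsHermitian := by rw [hWdef]; exact PS.hcfc_herm _ _
    have hWW : W * W = 1 := by
      rw [hWdef, PS.hcfc_mul, PS.hcfc_congr hCh (g := fun _ => 1) fun i => by
        split_ifs <;> norm_num, PS.hcfc_one]
    have hMM : M * star M = 1 := by
      have hsM : star M = M := by
        rw [hM, Matrix.star_mul, Matrix.star_mul, star_star,
          Matrix.star_eq_conjTranspose W, hWh.eq, ← Matrix.mul_assoc]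
      rw [hsM, hM]
      calc star V * W * V * (star V * W * V)
          = star V * (W * ((V * star V) * (W * V))) := by simp only [Matrix.mul_assoc]
        _ = star V * ((W * W) * V) := by rw [hVV', Matrix.one_mul]; simp only [Matrix.mul_assoc]
        _ = 1 := by rw [hWW, Matrix.one_mul, hVV]
    have hrow : ∀ i, ‖M i i‖ ≤ 1 := by
      intro i
      have hs : (M * star M) i i = (1:ℂ) := by rw [hMM]; exact Matrix.one_apply_eq i
      rw [Matrix.mul_apply] at hs
      have hs2 : ∑ j, ((Complex.normSq (M i j) : ℝ) : ℂ) = 1 := by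
        rw [← hs]
        refine Finset.sum_congr rfl fun j _ => ?_
        simp [Matrix.star_apply, Complex.mul_conj]
      have hs3 : ∑ j, Complex.normSq (M i j) = 1 := by
        have := congrArg Complex.re hs2
        rw [Complex.re_sum] at this
        simpa using this
      have hs4 : Complex.normSq (M i i) ≤ 1 := by
        rw [← hs3]
        exact Finset.single_le_sum (fun j _ => Complex.normSq_nonneg _) (Finset.mem_univ i)
      calc ‖M i i‖ = Real.sqrt (Complex.normSq (M i i)) := Complex.norm_def _
        _ ≤ Real.sqrt 1 := Real.sqrt_le_sqrt hs4
        _ = 1 := Real.sqrt_one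
    have htr : (W * X).trace = ∑ i, M i i * ((hX.eigenvalues i : ℝ) : ℂ) := by
      conv_lhs => rw [show X = V * Matrix.diagonal (RCLike.ofReal ∘ hX.eigenvalues) * star V
        from hX.spectral_theorem]
      rw [show W * (V * Matrix.diagonal (RCLike.ofReal ∘ hX.eigenvalues) * star V)
          = (W * V) * Matrix.diagonal (RCLike.ofReal ∘ hX.eigenvalues) * star V
        from by simp only [Matrix.mul_assoc], Matrix.trace_mul_cycle,
        show star V * (W * V) = M from by rw [hM, Matrix.mul_assoc]]
      simp [Matrix.trace, Matrix.diag, Matrix.mul_diagonal, Function.comp]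
    rw [htr, Complex.re_sum]
    refine Finset.sum_le_sum fun i _ => ?_
    have hre : (M i i * ((hX.eigenvalues i : ℝ) : ℂ)).re = (M i i).re * hX.eigenvalues i := by
      simp [Complex.mul_re]
    rw [hre]
    calc (M i i).re * hX.eigenvalues i ≤ |(M i i).re * hX.eigenvalues i| := le_abs_self _
      _ = |(M i i).re| * |hX.eigenvalues i| := abs_mul _ _
      _ ≤ 1 * |hX.eigenvalues i| := by
          refine mul_le_mul_of_nonneg_right ?_ (abs_nonneg _)
          exact le_trans (Complex.abs_re_le_norm _) (hrow i)
      _ = |hX.eigenvalues i| := one_mul _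
  -- combine
  have h2re : ((W * X).trace).re = ((absC * (A + B)).trace).re := by rw [h2]
  rw [pow_two]
  have final : ((C * C).trace).re ≤ traceNorm X := by
    calc ((C * C).trace).re ≤ ((absC * (A + B)).trace).re := h1
      _ = ((W * X).trace).re := h2re.symm
      _ ≤ ∑ i, |hX.eigenvalues i| := hbound
      _ = traceNorm X := htn.symm
  linarith
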